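/- Let M be a fundamental matrix of the linear quaternionic system ẋ = A(t)x. Then the system is asymptotically stable at t₀ if and only if ‖M(t)‖ → 0 as t → ∞. -/

import Mathlib

open Matrix Polynomial
open scoped Quaternion

noncomputable section

/-- The two complex components of a quaternion: `q = c1 q + (c2 q) * j`,
identifying `ℂ` with the real span of `1` and `i` in `ℍ`. -/
def Quaternion.c1 (q : ℍ[ℝ]) : ℂ := ⟨q.re, q.imI⟩

def Quaternion.c2 (q : ℍ[ℝ]) : ℂ := ⟨q.imJ, q.imK⟩

/-- The embedding of `ℂ` into `ℍ` as the real span of `1` and `i`. -/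
def Complex.toQuat (z : ℂ) : ℍ[ℝ] := ⟨z.re, z.im, 0, 0⟩

/-- The complex adjoint matrix `χ_A` of a quaternion matrix `A = A₁ + A₂·j`:
the block matrix `[[A₁, A₂], [-conj A₂, conj A₁]]`. -/
def chiMat {n : ℕ} (A : Matrix (Fin n) (Fin n) ℍ[ℝ]) :
    Matrix (Fin n ⊕ Fin n) (Fin n ⊕ Fin n) ℂ :=
  Matrix.fromBlocks (A.map Quaternion.c1) (A.map Quaternion.c2)
    ((-(A.map Quaternion.c2)).map (starRingEnd ℂ)) ((A.map Quaternion.c1).map (starRingEnd ℂ))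

/-- `ρ` is a standard eigenvalue of the quaternion matrix `A`: an eigenvalue of the
complex adjoint matrix `χ_A` with nonnegative imaginary part. -/
def IsStdEigenvalue {n : ℕ} (A : Matrix (Fin n) (Fin n) ℍ[ℝ]) (ρ : ℂ) : Prop :=
  (chiMat A).charpoly.IsRoot ρ ∧ 0 ≤ ρ.im

/-- `s` is the multiset of standard eigenvalues of `A` counted with multiplicity:
it has `n` elements, all with nonnegative imaginary part, and the characteristic
polynomial of `χ_A` is `∏_{z ∈ s} (X - z)·(X - conj z)`. -/
def IsStdEigs {n : ℕ} (A : Matrix (Fin n) (Fin n) ℍ[ℝ]) (s : Multiset ℂ) : Prop :=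
  Multiset.card s = n ∧ (∀ z ∈ s, 0 ≤ z.im) ∧
    (chiMat A).charpoly =
      (s.map (fun z => (X - C z) * (X - C (starRingEnd ℂ z)))).prod

/-- `x : ℝ → ℍ^n` is a solution of the linear quaternionic system `ẋ = A(t)x`. -/
def IsSol {n : ℕ} (A : ℝ → Matrix (Fin n) (Fin n) ℍ[ℝ]) (x : ℝ → Fin n → ℍ[ℝ]) : Prop :=
  ∀ t : ℝ, HasDerivAt x ((A t).mulVec (x t)) t

/-- The norm `‖x‖ = Σ_k |x_k|` on `ℍ^n`. -/
def vecNorm {n : ℕ} (x : Fin n → ℍ[ℝ]) : ℝ := ∑ k, ‖x k‖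

/-- The norm `‖A‖ = Σ_{i,j} |a_{ij}|` on `ℍ^{n×n}`. -/
def matNorm {n : ℕ} (A : Matrix (Fin n) (Fin n) ℍ[ℝ]) : ℝ := ∑ i, ∑ j, ‖A i j‖

/-- Stability (in the sense of Lyapunov) of the system `ẋ = A(t)x` at `t₀`. -/
def StableAt {n : ℕ} (A : ℝ → Matrix (Fin n) (Fin n) ℍ[ℝ]) (t₀ : ℝ) : Prop :=
  ∀ ε > (0:ℝ), ∃ δ > (0:ℝ), ∀ x : ℝ → Fin n → ℍ[ℝ], IsSol A x →
    vecNorm (x t₀) < δ → ∀ t ≥ t₀, vecNorm (x t) < ε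

/-- Asymptotic stability of the system `ẋ = A(t)x` at `t₀`. -/
def AsympStableAt {n : ℕ} (A : ℝ → Matrix (Fin n) (Fin n) ℍ[ℝ]) (t₀ : ℝ) : Prop :=
  StableAt A t₀ ∧ ∃ δ > (0:ℝ), ∀ x : ℝ → Fin n → ℍ[ℝ], IsSol A x →
    vecNorm (x t₀) < δ →
      Filter.Tendsto (fun t => vecNorm (x t)) Filter.atTop (nhds 0)

/-- `M` is a fundamental matrix of `ẋ = A(t)x`: entrywise `M'(t) = A(t)·M(t)`
and `M(t)` is invertible for every `t`. -/
def IsFundamental {n : ℕ} (A M : ℝ → Matrix (Fin n) (Fin n) ℍ[ℝ]) : Prop :=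
  (∀ (t : ℝ) (i j : Fin n), HasDerivAt (fun s => M s i j) ((A t * M t) i j) t) ∧
    ∀ t : ℝ, IsUnit (M t)

variable {n : ℕ}

def toLin (A : Matrix (Fin n) (Fin n) ℍ[ℝ]) : (Fin n → ℍ[ℝ]) →ₗ[ℝ] (Fin n → ℍ[ℝ]) where
  toFun := A.mulVec
  map_add' x y := Matrix.mulVec_add A x y
  map_smul' r x := Matrix.mulVec_smul A r x

def toL (A : Matrix (Fin n) (Fin n) ℍ[ℝ]) : (Fin n → ℍ[ℝ]) →L[ℝ] (Fin n → ℍ[ℝ]) :=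
  (toLin A).toContinuousLinearMap

@[simp] lemma toL_apply (A : Matrix (Fin n) (Fin n) ℍ[ℝ]) (v : Fin n → ℍ[ℝ]) :
    toL A v = A.mulVec v := rfl

lemma toL_mul (A B : Matrix (Fin n) (Fin n) ℍ[ℝ]) : toL (A * B) = (toL A).comp (toL B) := by
  ext v : 1
  simp [Matrix.mulVec_mulVec]

lemma toL_one : toL (1 : Matrix (Fin n) (Fin n) ℍ[ℝ]) = ContinuousLinearMap.id ℝ _ := by
  ext v : 1
  simp

lemma vecNorm_nonneg (x : Fin n → ℍ[ℝ]) : 0 ≤ vecNorm x :=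
  Finset.sum_nonneg fun _ _ => norm_nonneg _

lemma matNorm_nonneg (A : Matrix (Fin n) (Fin n) ℍ[ℝ]) : 0 ≤ matNorm A :=
  Finset.sum_nonneg fun _ _ => Finset.sum_nonneg fun _ _ => norm_nonneg _

lemma norm_le_vecNorm (x : Fin n → ℍ[ℝ]) : ‖x‖ ≤ vecNorm x := by
  rcases Nat.eq_zero_or_pos n with h | h
  · subst h
    simp [vecNorm, norm_le_zero_iff]
    funext i; exact i.elim0
  · rw [pi_norm_le_iff_of_nonneg (vecNorm_nonneg x)]
    intro i
    exact Finset.single_le_sum (f := fun k => ‖x k‖) (fun _ _ => norm_nonneg _)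
      (Finset.mem_univ i)

lemma vecNorm_le (x : Fin n → ℍ[ℝ]) : vecNorm x ≤ n * ‖x‖ := by
  calc vecNorm x ≤ ∑ _k : Fin n, ‖x‖ :=
        Finset.sum_le_sum fun k _ => norm_le_pi_norm x k
    _ = n * ‖x‖ := by simp [Finset.sum_const, nsmul_eq_mul]

lemma vecNorm_smul (r : ℝ) (x : Fin n → ℍ[ℝ]) : vecNorm (r • x) = |r| * vecNorm x := by
  simp [vecNorm, norm_smul, Finset.mul_sum, Real.norm_eq_abs]

lemma norm_toL_le (A : Matrix (Fin n) (Fin n) ℍ[ℝ]) : ‖toL A‖ ≤ matNorm A := by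
  refine ContinuousLinearMap.opNorm_le_bound _ (matNorm_nonneg A) fun v => ?_
  rcases Nat.eq_zero_or_pos n with h | h
  · subst h
    have : toL A v = 0 := by funext i; exact i.elim0
    rw [this, norm_zero]
    exact mul_nonneg (matNorm_nonneg A) (norm_nonneg v)
  rw [pi_norm_le_iff_of_nonneg (mul_nonneg (matNorm_nonneg A) (norm_nonneg v))]
  intro i
  calc ‖(A.mulVec v) i‖ = ‖∑ j, A i j * v j‖ := rfl
    _ ≤ ∑ j, ‖A i j * v j‖ := norm_sum_le _ _
    _ ≤ ∑ j, ‖A i j‖ * ‖v‖ := by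
        refine Finset.sum_le_sum fun j _ => ?_
        calc ‖A i j * v j‖ ≤ ‖A i j‖ * ‖v j‖ := norm_mul_le _ _
          _ ≤ ‖A i j‖ * ‖v‖ := by
              exact mul_le_mul_of_nonneg_left (norm_le_pi_norm v j) (norm_nonneg _)
    _ = (∑ j, ‖A i j‖) * ‖v‖ := by rw [Finset.sum_mul]
    _ ≤ matNorm A * ‖v‖ := by
        refine mul_le_mul_of_nonneg_right ?_ (norm_nonneg _)
        exact Finset.single_le_sum (f := fun i => ∑ j, ‖A i j‖)
          (fun _ _ => Finset.sum_nonneg fun _ _ => norm_nonneg _) (Finset.mem_univ i)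


variable {A M : ℝ → Matrix (Fin n) (Fin n) ℍ[ℝ]}


/-- The CLM `E →L E` determined by a single matrix entry `q` at position `(i,j)`. -/
def entryL (i j : Fin n) (q : ℍ[ℝ]) : (Fin n → ℍ[ℝ]) →L[ℝ] (Fin n → ℍ[ℝ]) :=
  LinearMap.toContinuousLinearMap
  { toFun := fun v => Pi.single i (q * v j)
    map_add' := fun v w => by
      rw [Pi.add_apply, mul_add, Pi.single_add]
    map_smul' := fun r v => by
      rw [Pi.smul_apply, mul_smul_comm, Pi.single_smul, RingHom.id_apply] }

@[simp] lemma entryL_apply (i j : Fin n) (q : ℍ[ℝ]) (v : Fin n → ℍ[ℝ]) :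
    entryL i j q v = Pi.single i (q * v j) := rfl

/-- `entryL i j` as a continuous linear map in `q`. -/
def entryCLM (i j : Fin n) : ℍ[ℝ] →L[ℝ] ((Fin n → ℍ[ℝ]) →L[ℝ] (Fin n → ℍ[ℝ])) :=
  LinearMap.toContinuousLinearMap
  { toFun := entryL i j
    map_add' := fun q q' => by
      ext v : 1
      simp [add_mul, Pi.single_add]
    map_smul' := fun r q => by
      ext v : 1
      simp [smul_mul_assoc, Pi.single_smul] }

lemma toL_eq_sum (B : Matrix (Fin n) (Fin n) ℍ[ℝ]) :
    toL B = ∑ i, ∑ j, entryCLM i j (B i j) := by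
  ext v : 1
  show B.mulVec v = _
  funext k
  rw [ContinuousLinearMap.sum_apply, Finset.sum_apply]
  have : ∀ i : Fin n, ((∑ j, entryCLM i j (B i j)) v) k
      = Pi.single (M := fun _ => ℍ[ℝ]) i (∑ j, B i j * v j) k := by
    intro i
    rw [ContinuousLinearMap.sum_apply, Finset.sum_apply]
    show (∑ j, Pi.single (M := fun _ => ℍ[ℝ]) i (B i j * v j) k) = _
    rcases eq_or_ne k i with rfl | hk
    · simp
    · simp [Pi.single_eq_of_ne hk]
  simp_rw [this]
  have h2 : (∑ i, Pi.single (M := fun _ => ℍ[ℝ]) i (∑ j, B i j * v j) k)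
      = ∑ j, B k j * v j := by
    simp [Finset.sum_pi_single]
  rw [h2]
  rfl

variable {A M : ℝ → Matrix (Fin n) (Fin n) ℍ[ℝ]}

lemma fund_hasDerivAt (hM : IsFundamental A M) (t : ℝ) :
    HasDerivAt (fun s => toL (M s)) (toL (A t) * toL (M t)) t := by
  have h1 : HasDerivAt (fun s => ∑ i, ∑ j, entryCLM i j (M s i j))
      (∑ i, ∑ j, entryCLM i j ((A t * M t) i j)) t := by
    refine HasDerivAt.fun_sum (𝕜 := ℝ) (F := (Fin n → ℍ[ℝ]) →L[ℝ] (Fin n → ℍ[ℝ])) fun i _ => ?_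
    refine HasDerivAt.fun_sum (𝕜 := ℝ) (F := (Fin n → ℍ[ℝ]) →L[ℝ] (Fin n → ℍ[ℝ])) fun j _ => ?_
    have h3 : HasFDerivAt (entryCLM i j) (entryCLM (n := n) i j) (M t i j) :=
      ContinuousLinearMap.hasFDerivAt _
    exact h3.comp_hasDerivAt (F := ℍ[ℝ]) (E := (Fin n → ℍ[ℝ]) →L[ℝ] (Fin n → ℍ[ℝ])) t (hM.1 t i j)
  have h2 : (fun s => ∑ i, ∑ j, entryCLM i j (M s i j)) = fun s => toL (M s) := by
    funext s; rw [toL_eq_sum]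
  rw [h2, ← toL_eq_sum, toL_mul] at h1
  exact h1

/-- The unit of the CLM ring corresponding to `M t`. -/
def funit (hM : IsFundamental A M) (t : ℝ) :
    ((Fin n → ℍ[ℝ]) →L[ℝ] (Fin n → ℍ[ℝ]))ˣ where
  val := toL (M t)
  inv := toL (Units.val ((hM.2 t).unit⁻¹))
  val_inv := by
    show (toL (M t)).comp _ = _
    rw [← toL_mul, (hM.2 t).mul_val_inv, toL_one]
    rfl
  inv_val := by
    show (toL _).comp _ = _
    rw [← toL_mul, (hM.2 t).val_inv_mul, toL_one]
    rfl

set_option maxHeartbeats 2000000 in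
set_option synthInstance.maxHeartbeats 1000000 in
lemma sol_repr (hM : IsFundamental A M) {x : ℝ → Fin n → ℍ[ℝ]} (hx : IsSol A x)
    (t₀ t : ℝ) :
    x t = toL (M t) (Ring.inverse (toL (M t₀)) (x t₀)) := by
  have hFu : ∀ s, toL (M s) = ↑(funit hM s) := fun s => rfl
  have hinv : ∀ s, Ring.inverse (toL (M s)) = ↑(funit hM s)⁻¹ := fun s =>
    Ring.inverse_unit (funit hM s)
  set c : ℝ → Fin n → ℍ[ℝ] := fun s => Ring.inverse (toL (M s)) (x s) with hc
  have hderiv : ∀ s, HasDerivAt c 0 s := by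
    intro s
    have hg : HasDerivAt (fun r => Ring.inverse (toL (M r)))
        (-(↑(funit hM s)⁻¹ * toL (A s))) s := by
      have h1 := (hasFDerivAt_ringInverse (𝕜 := ℝ) (R := (Fin n → ℍ[ℝ]) →L[ℝ] (Fin n → ℍ[ℝ])) (funit hM s)).comp_hasDerivAt (F := (Fin n → ℍ[ℝ]) →L[ℝ] (Fin n → ℍ[ℝ])) (E := (Fin n → ℍ[ℝ]) →L[ℝ] (Fin n → ℍ[ℝ])) s
        (fund_hasDerivAt hM s)
      convert h1 using 1
      case e'_4 => rfl
      case e'_5 => rfl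
      case e'_6 => rfl
      case e'_8 => rfl
      rw [ContinuousLinearMap.neg_apply, ContinuousLinearMap.mulLeftRight_apply, hFu s,
        mul_assoc, mul_assoc, (funit hM s).mul_inv, mul_one]
    have hxs : HasDerivAt x (toL (A s) (x s)) s := hx s
    have h3 := hg.clm_apply hxs
    have h4 : (-(↑(funit hM s)⁻¹ * toL (A s))) (x s)
        + Ring.inverse (toL (M s)) (toL (A s) (x s)) = 0 := by
      rw [hinv s, ContinuousLinearMap.neg_apply, ContinuousLinearMap.mul_apply]
      exact neg_add_cancel _
    rw [h4] at h3
    exact h3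
  have hconst : c t = c t₀ :=
    is_const_of_deriv_eq_zero (fun r => (hderiv r).differentiableAt)
      (fun r => (hderiv r).deriv) t t₀
  have hval : toL (M t) (c t) = x t := by
    show toL (M t) (Ring.inverse (toL (M t)) (x t)) = x t
    rw [hinv t, hFu t, ← ContinuousLinearMap.mul_apply, (funit hM t).mul_inv,
      ContinuousLinearMap.one_apply]
  rw [← hval, hconst]

lemma sol_bound (hM : IsFundamental A M) {x : ℝ → Fin n → ℍ[ℝ]} (hx : IsSol A x)
    (t₀ t : ℝ) :
    vecNorm (x t) ≤
      (n * ‖Ring.inverse (toL (M t₀))‖ * vecNorm (x t₀)) * matNorm (M t) := by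
  set G := ‖Ring.inverse (toL (M t₀))‖ with hG
  set c := Ring.inverse (toL (M t₀)) (x t₀) with hcdef
  have hcb : ‖c‖ ≤ G * vecNorm (x t₀) := by
    calc ‖c‖ ≤ G * ‖x t₀‖ := (Ring.inverse (toL (M t₀))).le_opNorm (x t₀)
      _ ≤ G * vecNorm (x t₀) :=
        mul_le_mul_of_nonneg_left (norm_le_vecNorm _) (norm_nonneg (Ring.inverse (toL (M t₀))))
  have h1 : ‖toL (M t) c‖ ≤ matNorm (M t) * (G * vecNorm (x t₀)) := by
    calc ‖toL (M t) c‖ ≤ ‖toL (M t)‖ * ‖c‖ := (toL (M t)).le_opNorm c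
      _ ≤ matNorm (M t) * ‖c‖ :=
        mul_le_mul_of_nonneg_right (norm_toL_le _) (norm_nonneg _)
      _ ≤ matNorm (M t) * (G * vecNorm (x t₀)) :=
        mul_le_mul_of_nonneg_left hcb (matNorm_nonneg _)
  calc vecNorm (x t) ≤ n * ‖x t‖ := vecNorm_le _
    _ = n * ‖toL (M t) c‖ := by rw [← sol_repr hM hx t₀ t]
    _ ≤ n * (matNorm (M t) * (G * vecNorm (x t₀))) :=
        mul_le_mul_of_nonneg_left h1 (by positivity)
    _ = (n * G * vecNorm (x t₀)) * matNorm (M t) := by ring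

lemma col_sol (hM : IsFundamental A M) (j : Fin n) :
    IsSol A (fun t k => M t k j) := by
  intro t
  refine hasDerivAt_pi.2 fun k => ?_
  exact hM.1 t k j

lemma smul_sol {x : ℝ → Fin n → ℍ[ℝ]} (hx : IsSol A x) (r : ℝ) :
    IsSol A (fun t => r • x t) := by
  intro t
  have h := (hx t).const_smul r
  have h2 : (A t).mulVec (r • x t) = r • (A t).mulVec (x t) :=
    Matrix.mulVec_smul (A t) r (x t)
  rw [h2]
  exact h

lemma matNorm_eq_sum_col (B : Matrix (Fin n) (Fin n) ℍ[ℝ]) :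
    matNorm B = ∑ j, vecNorm (fun k => B k j) := by
  rw [matNorm, Finset.sum_comm]
  rfl

lemma matNorm_continuous (hM : IsFundamental A M) :
    Continuous fun t => matNorm (M t) := by
  refine continuous_finset_sum _ fun i _ => continuous_finset_sum _ fun j _ => ?_
  have : Continuous fun t => M t i j :=
    continuous_iff_continuousAt.2 fun t => (hM.1 t i j).continuousAt
  exact this.norm

/-- the system is asymptotically stable at `t₀` iff `‖M(t)‖ → 0` as `t → ∞`. -/
theorem stmt5 {n : ℕ} (A M : ℝ → Matrix (Fin n) (Fin n) ℍ[ℝ]) (hA : Continuous A)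
    (hM : IsFundamental A M) (t₀ : ℝ) :
    AsympStableAt A t₀ ↔
      Filter.Tendsto (fun t => matNorm (M t)) Filter.atTop (nhds 0) := by
  constructor
  · rintro ⟨-, δ, hδ, hAs⟩
    have hcol : ∀ j : Fin n, Filter.Tendsto (fun t => vecNorm (fun k => M t k j))
        Filter.atTop (nhds 0) := by
      intro j
      set x : ℝ → Fin n → ℍ[ℝ] := fun t k => M t k j with hxdef
      have hxsol : IsSol A x := col_sol hM j
      set V := vecNorm (x t₀) with hV
      have hV0 : 0 ≤ V := vecNorm_nonneg _
      set r : ℝ := δ / (2 * (V + 1)) with hr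
      have hrpos : 0 < r := div_pos hδ (by linarith)
      have hsmall : vecNorm (r • x t₀) < δ := by
        rw [vecNorm_smul, abs_of_pos hrpos, ← hV]
        have h1 : r * V < r * (V + 1) := by
          exact mul_lt_mul_of_pos_left (by linarith) hrpos
        have h2 : r * (V + 1) = δ / 2 := by
          rw [hr]; field_simp
        linarith
      have htend := hAs (fun t => r • x t) (smul_sol hxsol r) hsmall
      have heq : (fun t => vecNorm (x t)) =
          fun t => r⁻¹ * vecNorm (r • x t) := by
        funext t
        rw [vecNorm_smul, abs_of_pos hrpos, ← mul_assoc, inv_mul_cancel₀ hrpos.ne',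
          one_mul]
      rw [heq]
      simpa using htend.const_mul r⁻¹
    have heq : (fun t => matNorm (M t)) =
        fun t => ∑ j, vecNorm (fun k => M t k j) := by
      funext t; exact matNorm_eq_sum_col (M t)
    rw [heq]
    have := tendsto_finset_sum (Finset.univ : Finset (Fin n))
      (fun j _ => hcol j)
    simpa using this
  · intro h
    set G := ‖Ring.inverse (toL (M t₀))‖ with hG
    have hG0 : 0 ≤ G := norm_nonneg (Ring.inverse (toL (M t₀)))
    -- a uniform bound for matNorm (M t) on [t₀, ∞)
    obtain ⟨T, hT⟩ : ∃ T, ∀ t ≥ T, matNorm (M t) < 1 :=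
      (h.eventually_lt_const one_pos).exists_forall_of_atTop
    obtain ⟨C, hC⟩ := (isCompact_Icc (a := t₀) (b := T)).exists_bound_of_continuousOn
      ((matNorm_continuous hM).continuousOn)
    set B : ℝ := max C 1 + 1 with hB
    have hB0 : 0 < B := by
      have : (1:ℝ) ≤ max C 1 := le_max_right _ _
      linarith
    have hBd : ∀ t ≥ t₀, matNorm (M t) ≤ B := by
      intro t ht
      rcases le_total t T with h1 | h1
      · have := hC t ⟨ht, h1⟩
        rw [Real.norm_eq_abs] at this
        have := (abs_le.1 this).2
        have h2 : C ≤ max C 1 := le_max_left _ _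
        linarith
      · have := hT t h1
        have h2 : (1:ℝ) ≤ max C 1 := le_max_right _ _
        linarith
    refine ⟨?_, ?_⟩
    · -- stability
      intro ε hε
      set K : ℝ := n * G * B with hK
      have hK0 : 0 ≤ K :=
        mul_nonneg (mul_nonneg (Nat.cast_nonneg n) hG0) hB0.le
      refine ⟨ε / (K + 1), div_pos hε (by linarith), fun x hx hsm t ht => ?_⟩
      have h1 := sol_bound hM hx t₀ t
      rw [← hG] at h1
      have h2 : (n * G * vecNorm (x t₀)) * matNorm (M t) ≤
          (n * G * vecNorm (x t₀)) * B :=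
        mul_le_mul_of_nonneg_left (hBd t ht)
          (mul_nonneg (mul_nonneg (Nat.cast_nonneg n) hG0) (vecNorm_nonneg _))
      have h3 : (n * G * vecNorm (x t₀)) * B ≤ K * (ε / (K + 1)) := by
        rw [hK]
        have := hsm.le
        nlinarith [vecNorm_nonneg (x t₀), hB0.le, hG0, hsm,
          mul_le_mul_of_nonneg_left hsm.le (mul_nonneg (mul_nonneg (Nat.cast_nonneg n) hG0) hB0.le)]
      have h4 : K * (ε / (K + 1)) < ε := by
        rw [div_eq_inv_mul]
        have hK1 : 0 < K + 1 := by linarith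
        rw [← mul_assoc, mul_comm K (K+1)⁻¹, mul_assoc]
        have : (K + 1)⁻¹ * (K * ε) < (K + 1)⁻¹ * ((K + 1) * ε) := by
          refine mul_lt_mul_of_pos_left ?_ (by positivity)
          nlinarith
        calc (K+1)⁻¹ * (K * ε) < (K+1)⁻¹ * ((K+1) * ε) := this
          _ = ε := by field_simp
      exact ((h1.trans h2).trans h3).trans_lt h4
    · -- attractivity
      refine ⟨1, one_pos, fun x hx _ => ?_⟩
      refine squeeze_zero (fun t => vecNorm_nonneg _)
        (fun t => sol_bound hM hx t₀ t) ?_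
      simpa using h.const_mul (n * G * vecNorm (x t₀))
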